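/- Let p be a prime, R a commutative ring in which p = 0 (an 𝔽_p-algebra), F₁ and F₂ formal group laws over R, and φ : F₁ → F₂ an isomorphism of formal group laws. Let u₁ and u₂ denote the coefficients of T^p in the p-series [p]_{F₁} and [p]_{F₂} respectively, and let b = φ′(0) be the linear coefficient of φ (a unit of R). Then u₁ = b^{p−1} · u₂. (That is, the section v₁ = u₁·η^{⊗(p−1)} of ω^{⊗(p−1)} is an isomorphism invariant.) -/

import Mathlib

noncomputable section

open PowerSeries

namespace FGL

variable {R : Type*} [CommRing R]

/-- Total degree of a monomial exponent. -/
def deg (m : Fin 2 →₀ ℕ) : ℕ := m 0 + m 1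

/-- Formal partial derivative of a two-variable power series with respect to variable `i`. -/
def pderiv2 (i : Fin 2) (F : MvPowerSeries (Fin 2) R) : MvPowerSeries (Fin 2) R :=
  fun m => ((m i + 1 : ℕ) : R) * MvPowerSeries.coeff (m + Finsupp.single i 1) F

/-- Substitution of two power series (in any multivariable power series ring, with zero
constant terms) into a two-variable power series: `F (a, b)`. -/
def subst2 {τ : Type*} (a b : MvPowerSeries τ R) (F : MvPowerSeries (Fin 2) R) :
    MvPowerSeries τ R :=
  fun m => ∑ i ∈ Finset.range ((m.sum fun _ k => k) + 1),
    ∑ j ∈ Finset.range ((m.sum fun _ k => k) + 1),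
      MvPowerSeries.coeff (Finsupp.single 0 i + Finsupp.single 1 j) F *
        MvPowerSeries.coeff m (a ^ i * b ^ j)

/-- Substitution of two one-variable power series into a two-variable power series:
`F (a, b)`, a one-variable power series. -/
def subst2one (a b : PowerSeries R) (F : MvPowerSeries (Fin 2) R) : PowerSeries R :=
  PowerSeries.mk fun n => ∑ i ∈ Finset.range (n + 1), ∑ j ∈ Finset.range (n + 1),
    MvPowerSeries.coeff (Finsupp.single 0 i + Finsupp.single 1 j) F *
      PowerSeries.coeff n (a ^ i * b ^ j)

/-- Substitution of a multivariable power series (with zero constant term) into a one-variable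
power series: `f (a)`. -/
def psubst {τ : Type*} (a : MvPowerSeries τ R) (f : PowerSeries R) : MvPowerSeries τ R :=
  fun m => ∑ i ∈ Finset.range ((m.sum fun _ k => k) + 1),
    PowerSeries.coeff i f * MvPowerSeries.coeff m (a ^ i)

/-- Composition of one-variable power series: `f (a)`. -/
def pcomp (a f : PowerSeries R) : PowerSeries R :=
  PowerSeries.mk fun n => ∑ i ∈ Finset.range (n + 1),
    PowerSeries.coeff i f * PowerSeries.coeff n (a ^ i)

/-- `F` is a (one-dimensional, commutative) formal group law over `R`:
`F(X,0) = X`, `F(0,Y) = Y`, `F(F(X,Y),Z) = F(X,F(Y,Z))` and `F(X,Y) = F(Y,X)`. -/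
def IsFGL (F : MvPowerSeries (Fin 2) R) : Prop :=
  subst2 (MvPowerSeries.X 0) 0 F = MvPowerSeries.X 0 ∧
  subst2 0 (MvPowerSeries.X 1) F = MvPowerSeries.X 1 ∧
  subst2 (subst2 (MvPowerSeries.X 0) (MvPowerSeries.X 1) F) (MvPowerSeries.X 2) F
    = subst2 (MvPowerSeries.X 0 : MvPowerSeries (Fin 3) R)
        (subst2 (MvPowerSeries.X 1) (MvPowerSeries.X 2) F) F ∧
  subst2 (MvPowerSeries.X 1) (MvPowerSeries.X 0) F = F

/-- `φ` is a homomorphism of formal group laws `F → G`: it has zero constant term and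
`φ(F(X,Y)) = G(φ(X), φ(Y))`. -/
def IsFGLHom (F G : MvPowerSeries (Fin 2) R) (φ : PowerSeries R) : Prop :=
  PowerSeries.constantCoeff φ = 0 ∧
  psubst F φ =
    subst2 (psubst (MvPowerSeries.X 0) φ) (psubst (MvPowerSeries.X 1) φ) G

/-- Evaluation `F(0, T)` of a two-variable power series at `X = 0`, `Y = T`. -/
def evalX0 (F : MvPowerSeries (Fin 2) R) : PowerSeries R :=
  PowerSeries.mk fun n => MvPowerSeries.coeff (Finsupp.single 1 n) F

/-- Evaluation `F(T, 0)` of a two-variable power series at `X = T`, `Y = 0`. -/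
def evalY0 (F : MvPowerSeries (Fin 2) R) : PowerSeries R :=
  PowerSeries.mk fun n => MvPowerSeries.coeff (Finsupp.single 0 n) F

/-- The `n`-series of a formal group law: `[1](T) = T`, `[n+1](T) = F(T, [n](T))`. -/
def nSeries (F : MvPowerSeries (Fin 2) R) : ℕ → PowerSeries R
  | 0 => 0
  | 1 => PowerSeries.X
  | n + 2 => subst2one PowerSeries.X (nSeries F (n + 1)) F

end FGL

namespace FGL

open MvPowerSeries Finset

variable {R : Type*} [CommRing R]

/-- Total degree of an exponent finsupp. -/
def msize {τ : Type*} (m : τ →₀ ℕ) : ℕ := m.sum fun _ k => k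

lemma msize_zero {τ : Type*} : msize (0 : τ →₀ ℕ) = 0 := by simp [msize]

lemma msize_add {τ : Type*} (u v : τ →₀ ℕ) : msize (u + v) = msize u + msize v := by
  simp [msize, Finsupp.sum_add_index']

lemma msize_single {τ : Type*} (i : τ) (n : ℕ) : msize (Finsupp.single i n) = n := by
  simp [msize, Finsupp.sum_single_index]

lemma msize_eq_zero {τ : Type*} {m : τ →₀ ℕ} (h : msize m = 0) : m = 0 := by
  ext i
  by_cases hi : i ∈ m.support
  · have := Finset.sum_eq_zero_iff.1 h i hi
    simpa using this
  · simpa using Finsupp.notMem_support_iff.1 hi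

lemma apply_le_msize {τ : Type*} (m : τ →₀ ℕ) (i : τ) : m i ≤ msize m := by
  by_cases hi : i ∈ m.support
  · exact Finset.single_le_sum (f := fun j => m j) (fun _ _ => Nat.zero_le _) hi
  · simp [Finsupp.notMem_support_iff.1 hi]

/-- Exponents with all components `< N`. -/
def Box (σ : Type*) [Fintype σ] [DecidableEq σ] (N : ℕ) : Finset (σ →₀ ℕ) :=
  (Fintype.piFinset fun _ : σ => Finset.range N).image Finsupp.equivFunOnFinite.symm

lemma mem_Box {σ : Type*} [Fintype σ] [DecidableEq σ] {N : ℕ} {d : σ →₀ ℕ} :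
    d ∈ Box σ N ↔ ∀ i, d i < N := by
  constructor
  · rintro hd i
    obtain ⟨f, hf, rfl⟩ := Finset.mem_image.1 hd
    have := Fintype.mem_piFinset.1 hf i
    simpa using this
  · intro h
    refine Finset.mem_image.2 ⟨Finsupp.equivFunOnFinite d, ?_, by simp⟩
    exact Fintype.mem_piFinset.2 fun i => by simpa using h i

lemma Box_mono {σ : Type*} [Fintype σ] [DecidableEq σ] {N N' : ℕ} (h : N ≤ N') :
    Box σ N ⊆ Box σ N' := fun d hd => mem_Box.2 fun i => lt_of_lt_of_le (mem_Box.1 hd i) h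

/-- `A` has order at least `r` : all coefficients in total degree `< r` vanish. -/
def OrdGE {τ : Type*} (A : MvPowerSeries τ R) (r : ℕ) : Prop :=
  ∀ u : τ →₀ ℕ, msize u < r → MvPowerSeries.coeff u A = 0

lemma ordGE_one {τ : Type*} {A : MvPowerSeries τ R}
    (h : MvPowerSeries.constantCoeff A = 0) : OrdGE A 1 := by
  intro u hu
  have : u = 0 := msize_eq_zero (by omega)
  subst this
  simpa [MvPowerSeries.coeff_zero_eq_constantCoeff] using h

lemma OrdGE.mul {τ : Type*} [DecidableEq τ] {A B : MvPowerSeries τ R} {r s : ℕ}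
    (hA : OrdGE A r) (hB : OrdGE B s) : OrdGE (A * B) (r + s) := by
  intro u hu
  rw [MvPowerSeries.coeff_mul]
  refine Finset.sum_eq_zero fun p hp => ?_
  have hps : p.1 + p.2 = u := Finset.HasAntidiagonal.mem_antidiagonal.1 hp
  have hsz : msize p.1 + msize p.2 = msize u := by rw [← msize_add, hps]
  rcases lt_or_ge (msize p.1) r with h1 | h1
  · rw [hA p.1 h1, zero_mul]
  · rw [hB p.2 (by omega), mul_zero]

lemma OrdGE.pow {τ : Type*} [DecidableEq τ] {A : MvPowerSeries τ R} {r : ℕ}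
    (hA : OrdGE A r) (n : ℕ) : OrdGE (A ^ n) (n * r) := by
  induction n with
  | zero => intro u hu; omega
  | succ n ih =>
    have h2 := ih.mul hA
    rw [← pow_succ] at h2
    intro u hu
    exact h2 u (by rw [Nat.succ_mul] at hu; omega)

lemma ordGE_prod_finset {ι τ : Type*} [DecidableEq τ] (s : Finset ι) (g : ι → MvPowerSeries τ R)
    (r : ι → ℕ) (h : ∀ i ∈ s, OrdGE (g i) (r i)) :
    OrdGE (∏ i ∈ s, g i) (∑ i ∈ s, r i) := by
  classical
  induction s using Finset.induction with
  | empty => intro u hu; simp at hu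
  | @insert i s hi ih =>
    rw [Finset.prod_insert hi, Finset.sum_insert hi]
    exact (h i (Finset.mem_insert_self i s)).mul
      (ih fun j hj => h j (Finset.mem_insert_of_mem hj))

lemma ordGE_prod {σ τ : Type*} [DecidableEq τ] [Fintype σ] {a : σ → MvPowerSeries τ R}
    (ha : ∀ i, MvPowerSeries.constantCoeff (a i) = 0) (d : σ →₀ ℕ) :
    OrdGE (∏ i, a i ^ d i) (∑ i, d i) := by
  have := ordGE_prod_finset Finset.univ (fun i => a i ^ d i) (fun i => d i)
    (fun i _ => by simpa using (ordGE_one (ha i)).pow (d i))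
  exact this

/-- Key vanishing: coefficient of `m` in `∏ aᵢ^{dᵢ}` vanishes when `msize m < Σ d`. -/
lemma coeff_prod_pow_eq_zero {σ τ : Type*} [DecidableEq τ] [Fintype σ] [DecidableEq σ]
    {a : σ → MvPowerSeries τ R} (ha : ∀ i, MvPowerSeries.constantCoeff (a i) = 0)
    {d : σ →₀ ℕ} {m : τ →₀ ℕ} (h : msize m < msize d) :
    MvPowerSeries.coeff m (∏ i, a i ^ d i) = 0 := by
  have hd : msize d = ∑ i, d i := Finsupp.sum_fintype _ _ fun _ => rfl
  exact ordGE_prod ha d m (by omega)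

end FGL

namespace FGL

open MvPowerSeries Finset

variable {R : Type*} [CommRing R]

section Gsubst

variable {σ τ : Type*} [Fintype σ] [DecidableEq σ]

/-- General substitution of a family `a : σ → MvPowerSeries τ R` (with zero constant terms)
into `F : MvPowerSeries σ R`. -/
def gsubst (a : σ → MvPowerSeries τ R) (F : MvPowerSeries σ R) : MvPowerSeries τ R :=
  fun m => ∑ d ∈ Box σ (msize m + 1),
    MvPowerSeries.coeff d F * MvPowerSeries.coeff m (∏ i, a i ^ d i)

lemma coeff_gsubst (a : σ → MvPowerSeries τ R) (F : MvPowerSeries σ R) (m : τ →₀ ℕ) :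
    MvPowerSeries.coeff m (gsubst a F)
      = ∑ d ∈ Box σ (msize m + 1),
          MvPowerSeries.coeff d F * MvPowerSeries.coeff m (∏ i, a i ^ d i) := rfl

variable [DecidableEq τ]

/-- sum over any big enough box. -/
lemma coeff_gsubst_box {a : σ → MvPowerSeries τ R}
    (ha : ∀ i, MvPowerSeries.constantCoeff (a i) = 0) (F : MvPowerSeries σ R)
    {m : τ →₀ ℕ} {N : ℕ} (hN : msize m < N) :
    MvPowerSeries.coeff m (gsubst a F)
      = ∑ d ∈ Box σ N, MvPowerSeries.coeff d F *
          MvPowerSeries.coeff m (∏ i, a i ^ d i) := by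
  rw [coeff_gsubst]
  refine Finset.sum_subset (Box_mono (by omega)) fun d hd hd' => ?_
  have : ∃ i, msize m < d i := by
    by_contra h
    push_neg at h
    exact hd' (mem_Box.2 fun i => by have := h i; omega)
  obtain ⟨i, hi⟩ := this
  rw [coeff_prod_pow_eq_zero ha (lt_of_lt_of_le hi (apply_le_msize d i)), mul_zero]

/-- Coefficients of the evaluation of a polynomial, as a boxed sum. -/
lemma coeff_aeval_box {a : σ → MvPowerSeries τ R}
    (ha : ∀ i, MvPowerSeries.constantCoeff (a i) = 0) (P : MvPolynomial σ R)
    {m : τ →₀ ℕ} {N : ℕ} (hN : msize m < N) :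
    MvPowerSeries.coeff m (MvPolynomial.aeval a P : MvPowerSeries τ R)
      = ∑ d ∈ Box σ N, MvPolynomial.coeff d P *
          MvPowerSeries.coeff m (∏ i, a i ^ d i) := by
  conv_lhs => rw [P.as_sum]
  rw [map_sum, map_sum]
  have hterm : ∀ d : σ →₀ ℕ, MvPowerSeries.coeff m
      ((MvPolynomial.aeval a) (MvPolynomial.monomial d (MvPolynomial.coeff d P)))
      = MvPolynomial.coeff d P * MvPowerSeries.coeff m (∏ i, a i ^ d i) := by
    intro d
    rw [MvPolynomial.aeval_monomial, Finsupp.prod_fintype _ _ (fun i => pow_zero _),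
      ← Algebra.smul_def, map_smul, smul_eq_mul]
  rw [Finset.sum_congr rfl fun d _ => hterm d]
  -- now compare the two index sets
  rw [← Finset.sum_inter_add_sum_sdiff (Box σ N) (P.support)]
  have h1 : ∑ d ∈ Box σ N \ P.support, MvPolynomial.coeff d P *
      MvPowerSeries.coeff m (∏ i, a i ^ d i) = 0 :=
    Finset.sum_eq_zero fun d hd => by
      rw [MvPolynomial.notMem_support_iff.1 (Finset.mem_sdiff.1 hd).2, zero_mul]
  rw [h1, add_zero]
  refine (Finset.sum_subset Finset.inter_subset_right fun d hd hd' => ?_).symm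
  have hd2 : d ∉ Box σ N := fun hbox => hd' (Finset.mem_inter.2 ⟨hbox, hd⟩)
  have : ∃ i, N ≤ d i := by
    by_contra h
    push_neg at h
    exact hd2 (mem_Box.2 h)
  obtain ⟨i, hi⟩ := this
  rw [coeff_prod_pow_eq_zero ha (lt_of_lt_of_le (lt_of_lt_of_le hN hi) (apply_le_msize d i)),
    mul_zero]

/-- Box truncation of a power series, as a polynomial. -/
def truncB (N : ℕ) (F : MvPowerSeries σ R) : MvPolynomial σ R :=
  ∑ d ∈ Box σ N, MvPolynomial.monomial d (MvPowerSeries.coeff d F)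

lemma coeff_truncB {N : ℕ} {F : MvPowerSeries σ R} {d : σ →₀ ℕ} (hd : d ∈ Box σ N) :
    MvPolynomial.coeff d (truncB N F) = MvPowerSeries.coeff d F := by
  rw [truncB]
  rw [MvPolynomial.coeff_sum]
  rw [Finset.sum_congr rfl fun e _ => MvPolynomial.coeff_monomial d e _]
  rw [Finset.sum_ite_eq' (Box σ N) d]
  simp [hd]

lemma coeff_gsubst_eq_aeval_truncB {a : σ → MvPowerSeries τ R}
    (ha : ∀ i, MvPowerSeries.constantCoeff (a i) = 0) (F : MvPowerSeries σ R)
    {m : τ →₀ ℕ} {N : ℕ} (hN : msize m < N) :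
    MvPowerSeries.coeff m (gsubst a F)
      = MvPowerSeries.coeff m (MvPolynomial.aeval a (truncB N F) : MvPowerSeries τ R) := by
  rw [coeff_gsubst_box ha F hN, coeff_aeval_box ha _ hN]
  exact Finset.sum_congr rfl fun d hd => by rw [coeff_truncB hd]

omit [DecidableEq τ] in
lemma gsubst_add {a : σ → MvPowerSeries τ R} (F G : MvPowerSeries σ R) :
    gsubst a (F + G) = gsubst a F + gsubst a G := by
  ext m
  rw [map_add, coeff_gsubst, coeff_gsubst, coeff_gsubst, ← Finset.sum_add_distrib]
  exact Finset.sum_congr rfl fun d _ => by rw [map_add, add_mul]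

lemma gsubst_C {a : σ → MvPowerSeries τ R} (r : R) :
    gsubst a (MvPowerSeries.C r) = MvPowerSeries.C r := by
  ext m
  rw [coeff_gsubst]
  rw [Finset.sum_congr rfl fun d (_ : d ∈ Box σ (msize m + 1)) => by
    rw [MvPowerSeries.coeff_C, ite_mul, zero_mul]]
  rw [Finset.sum_ite_eq' (Box σ (msize m + 1)) 0
    (fun d => r * MvPowerSeries.coeff m (∏ i, a i ^ d i))]
  rw [if_pos (mem_Box.2 fun i => by simp)]
  simp [MvPowerSeries.coeff_one, MvPowerSeries.coeff_C]
lemma gsubst_one {a : σ → MvPowerSeries τ R} : gsubst a (1 : MvPowerSeries σ R) = 1 := by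
  have := gsubst_C (a := a) (1 : R)
  simpa using this

omit [DecidableEq τ] in
lemma gsubst_zero {a : σ → MvPowerSeries τ R} : gsubst a (0 : MvPowerSeries σ R) = 0 := by
  ext m; rw [coeff_gsubst]; simp

omit [DecidableEq τ] in
lemma constantCoeff_gsubst (a : σ → MvPowerSeries τ R) (F : MvPowerSeries σ R) :
    MvPowerSeries.constantCoeff (gsubst a F) = MvPowerSeries.constantCoeff F := by
  rw [← MvPowerSeries.coeff_zero_eq_constantCoeff, ← MvPowerSeries.coeff_zero_eq_constantCoeff,
    coeff_gsubst]
  rw [Finset.sum_eq_single 0]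
  · simp
  · intro d hd hd0
    have h1 := mem_Box.1 hd
    refine absurd (Finsupp.ext fun i => ?_) hd0
    have := h1 i
    rw [msize_zero] at this
    simpa using Nat.lt_one_iff.1 this
  · intro h
    exact absurd (mem_Box.2 fun i => by simp [msize_zero]) h

lemma gsubst_mul {a : σ → MvPowerSeries τ R}
    (ha : ∀ i, MvPowerSeries.constantCoeff (a i) = 0) (F G : MvPowerSeries σ R) :
    gsubst a (F * G) = gsubst a F * gsubst a G := by
  ext m
  set N := msize m + 1 with hNdef
  have hN : msize m < N := by omega
  have key : ∀ d ∈ Box σ N, MvPolynomial.coeff d (truncB N F * truncB N G)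
      = MvPowerSeries.coeff d (F * G) := by
    intro d hd
    rw [MvPolynomial.coeff_mul, MvPowerSeries.coeff_mul]
    refine Finset.sum_congr rfl fun p hp => ?_
    have hps : p.1 + p.2 = d := Finset.HasAntidiagonal.mem_antidiagonal.1 hp
    have happ : ∀ i, p.1 i + p.2 i = d i := fun i => by rw [← hps, Finsupp.add_apply]
    have h1 : p.1 ∈ Box σ N := mem_Box.2 fun i => by
      have := happ i; have := mem_Box.1 hd i; omega
    have h2 : p.2 ∈ Box σ N := mem_Box.2 fun i => by
      have := happ i; have := mem_Box.1 hd i; omega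
    rw [coeff_truncB h1, coeff_truncB h2]
  calc MvPowerSeries.coeff m (gsubst a (F * G))
      = ∑ d ∈ Box σ N, MvPowerSeries.coeff d (F * G) *
          MvPowerSeries.coeff m (∏ i, a i ^ d i) := coeff_gsubst_box ha _ hN
    _ = ∑ d ∈ Box σ N, MvPolynomial.coeff d (truncB N F * truncB N G) *
          MvPowerSeries.coeff m (∏ i, a i ^ d i) :=
        Finset.sum_congr rfl fun d hd => by rw [key d hd]
    _ = MvPowerSeries.coeff m
          (MvPolynomial.aeval a (truncB N F * truncB N G) : MvPowerSeries τ R) :=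
        (coeff_aeval_box ha _ hN).symm
    _ = MvPowerSeries.coeff m ((MvPolynomial.aeval a (truncB N F) : MvPowerSeries τ R) *
          (MvPolynomial.aeval a (truncB N G) : MvPowerSeries τ R)) := by rw [map_mul]
    _ = MvPowerSeries.coeff m (gsubst a F * gsubst a G) := by
        rw [MvPowerSeries.coeff_mul, MvPowerSeries.coeff_mul]
        refine Finset.sum_congr rfl fun p hp => ?_
        have hps : p.1 + p.2 = m := Finset.HasAntidiagonal.mem_antidiagonal.1 hp
        have hsz : msize p.1 + msize p.2 = msize m := by rw [← msize_add, hps]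
        rw [coeff_gsubst_eq_aeval_truncB ha F (N := N) (by omega),
          coeff_gsubst_eq_aeval_truncB ha G (N := N) (by omega)]

/-- `gsubst` as an algebra homomorphism. -/
def gsubstAlgHom {a : σ → MvPowerSeries τ R}
    (ha : ∀ i, MvPowerSeries.constantCoeff (a i) = 0) :
    MvPowerSeries σ R →ₐ[R] MvPowerSeries τ R where
  toFun := gsubst a
  map_one' := gsubst_one
  map_mul' := gsubst_mul ha
  map_zero' := gsubst_zero
  map_add' := gsubst_add
  commutes' := fun r => by
    show gsubst a ((algebraMap R (MvPowerSeries σ R)) r) = _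
    rw [MvPowerSeries.algebraMap_apply, MvPowerSeries.algebraMap_apply]
    simp only [Algebra.algebraMap_self, RingHom.id_apply]
    exact gsubst_C r

lemma gsubst_X {a : σ → MvPowerSeries τ R}
    (ha : ∀ i, MvPowerSeries.constantCoeff (a i) = 0) (i : σ) :
    gsubst a (MvPowerSeries.X i) = a i := by
  ext m
  rw [coeff_gsubst]
  rw [Finset.sum_congr rfl fun d (_ : d ∈ Box σ (msize m + 1)) => by
    rw [MvPowerSeries.coeff_X]]
  have hprod : (∏ j, a j ^ (Finsupp.single i 1) j) = a i := by
    rw [Finset.prod_eq_single i (fun j _ hj => by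
      rw [Finsupp.single_apply, if_neg (Ne.symm hj), pow_zero]) (fun h => absurd (mem_univ i) h)]
    rw [Finsupp.single_eq_same, pow_one]
  rw [Finset.sum_congr rfl fun d (_ : d ∈ Box σ (msize m + 1)) => by
    rw [ite_mul, zero_mul]]
  rw [Finset.sum_ite_eq' (Box σ (msize m + 1)) (Finsupp.single i 1)
    (fun d => 1 * MvPowerSeries.coeff m (∏ j, a j ^ d j))]
  rcases Nat.eq_zero_or_pos (msize m) with hm | hm
  · have hnot : Finsupp.single i 1 ∉ Box σ (msize m + 1) := by
      rw [hm]
      intro hmem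
      have := mem_Box.1 hmem i
      rw [Finsupp.single_eq_same] at this
      omega
    rw [if_neg hnot]
    have : m = 0 := msize_eq_zero hm
    subst this
    rw [MvPowerSeries.coeff_zero_eq_constantCoeff]
    exact (ha i).symm
  · rw [if_pos (mem_Box.2 fun j => by
      rcases eq_or_ne j i with rfl | hj
      · rw [Finsupp.single_eq_same]; omega
      · rw [Finsupp.single_apply, if_neg (Ne.symm hj)]; omega)]
    rw [hprod, one_mul]

lemma gsubst_X_id (F : MvPowerSeries σ R) :
    gsubst (fun i => (MvPowerSeries.X i : MvPowerSeries σ R)) F = F := by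
  ext m
  rw [coeff_gsubst]
  have hprod : ∀ d : σ →₀ ℕ, (∏ i, (MvPowerSeries.X i : MvPowerSeries σ R) ^ d i)
      = MvPowerSeries.monomial d 1 := by
    intro d
    rw [Finset.prod_congr rfl fun i (_ : i ∈ univ) => MvPowerSeries.X_pow_eq i (d i)]
    have : ∀ s : Finset σ, (∏ i ∈ s, (MvPowerSeries.monomial (Finsupp.single i (d i)) (1:R)))
        = MvPowerSeries.monomial (∑ i ∈ s, Finsupp.single i (d i)) 1 := by
      intro s
      induction s using Finset.induction with
      | empty => simp
      | @insert j s hj ih =>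
        rw [Finset.prod_insert hj, Finset.sum_insert hj, ih,
          MvPowerSeries.monomial_mul_monomial, one_mul]
    rw [this univ, Finsupp.univ_sum_single]
  rw [Finset.sum_congr rfl fun d (_ : d ∈ Box σ (msize m + 1)) => by
    rw [hprod d, MvPowerSeries.coeff_monomial, mul_ite, mul_one, mul_zero]]
  rw [Finset.sum_ite_eq (Box σ (msize m + 1)) m (fun d => MvPowerSeries.coeff d F)]
  rw [if_pos (mem_Box.2 fun i => Nat.lt_succ_of_le (apply_le_msize m i))]

/-- Composition law for `gsubst`. -/
lemma gsubst_gsubst {υ : Type*} [Fintype τ]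
    {a : σ → MvPowerSeries τ R} {b : τ → MvPowerSeries υ R}
    (ha : ∀ i, MvPowerSeries.constantCoeff (a i) = 0)
    (hb : ∀ j, MvPowerSeries.constantCoeff (b j) = 0)
    (F : MvPowerSeries σ R) :
    gsubst b (gsubst a F) = gsubst (fun i => gsubst b (a i)) F := by
  classical
  ext m
  set N := msize m + 1 with hNdef
  set M := Fintype.card τ * msize m + msize m + 1 with hMdef
  have hM : msize m < M := by omega
  have step1 : ∀ e : τ →₀ ℕ, e ∈ Box τ N → MvPowerSeries.coeff e (gsubst a F)
      = MvPowerSeries.coeff e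
          (MvPolynomial.aeval a (truncB M F) : MvPowerSeries τ R) := by
    intro e he
    refine coeff_gsubst_eq_aeval_truncB ha F ?_
    have h1 : msize e = ∑ j, e j := Finsupp.sum_fintype _ _ fun _ => rfl
    have h2 : ∀ j, e j ≤ msize m := fun j => by have := mem_Box.1 he j; omega
    have h3 : msize e ≤ Fintype.card τ * msize m := by
      rw [h1]
      calc ∑ j, e j ≤ ∑ _j : τ, msize m := Finset.sum_le_sum fun j _ => h2 j
        _ = Fintype.card τ * msize m := by rw [Finset.sum_const, smul_eq_mul, Finset.card_univ]
    omega
  have lhs_eq : MvPowerSeries.coeff m (gsubst b (gsubst a F))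
      = MvPowerSeries.coeff m
          (gsubst b (MvPolynomial.aeval a (truncB M F) : MvPowerSeries τ R)) := by
    rw [coeff_gsubst, coeff_gsubst]
    exact Finset.sum_congr rfl fun e he => by rw [step1 e he]
  rw [lhs_eq]
  have algstep : (gsubstAlgHom hb).comp (MvPolynomial.aeval a)
      = MvPolynomial.aeval (fun i => gsubst b (a i)) := by
    apply MvPolynomial.algHom_ext
    intro i
    simp only [AlgHom.coe_comp, Function.comp_apply, MvPolynomial.aeval_X]
    show gsubst b (a i) = _
    rfl
  have : gsubst b (MvPolynomial.aeval a (truncB M F) : MvPowerSeries τ R)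
      = (MvPolynomial.aeval (fun i => gsubst b (a i)) (truncB M F) : MvPowerSeries υ R) := by
    have := congrArg (fun f => f (truncB M F)) (congrArg DFunLike.coe algstep)
    exact this
  rw [this]
  exact (coeff_gsubst_eq_aeval_truncB (fun i => by
    rw [constantCoeff_gsubst]; exact ha i) F hM).symm

end Gsubst

end FGL

namespace FGL

open MvPowerSeries Finset

variable {R : Type*} [CommRing R]

section BridgeLemmas

variable {τ : Type*}

lemma coeff_subst2 (a b : MvPowerSeries τ R) (F : MvPowerSeries (Fin 2) R) (m : τ →₀ ℕ) :
    MvPowerSeries.coeff m (subst2 a b F)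
      = ∑ i ∈ Finset.range (msize m + 1), ∑ j ∈ Finset.range (msize m + 1),
          MvPowerSeries.coeff (Finsupp.single 0 i + Finsupp.single 1 j) F *
            MvPowerSeries.coeff m (a ^ i * b ^ j) := rfl

lemma coeff_psubst (a : MvPowerSeries τ R) (f : PowerSeries R) (m : τ →₀ ℕ) :
    MvPowerSeries.coeff m (psubst a f)
      = ∑ i ∈ Finset.range (msize m + 1),
          PowerSeries.coeff i f * MvPowerSeries.coeff m (a ^ i) := rfl

lemma fin2_finsupp_eq (d : Fin 2 →₀ ℕ) :
    d = Finsupp.single 0 (d 0) + Finsupp.single 1 (d 1) := by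
  ext i
  fin_cases i <;> simp [Finsupp.single_apply]

lemma msize_fin2 (d : Fin 2 →₀ ℕ) : msize d = d 0 + d 1 := by
  conv_lhs => rw [fin2_finsupp_eq d]
  rw [msize_add, msize_single, msize_single]

lemma single_add_single_apply₀ (i j : ℕ) :
    (Finsupp.single (0 : Fin 2) i + Finsupp.single (1 : Fin 2) j) 0 = i := by
  simp [Finsupp.single_apply]

lemma single_add_single_apply₁ (i j : ℕ) :
    (Finsupp.single (0 : Fin 2) i + Finsupp.single (1 : Fin 2) j) 1 = j := by
  simp [Finsupp.single_apply]

lemma mem_Box_pair {N i j : ℕ} (hi : i < N) (hj : j < N) :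
    (Finsupp.single 0 i + Finsupp.single 1 j : Fin 2 →₀ ℕ) ∈ Box (Fin 2) N := by
  refine mem_Box.2 (Fin.forall_fin_two.2 ⟨?_, ?_⟩)
  · rw [single_add_single_apply₀]; exact hi
  · rw [single_add_single_apply₁]; exact hj

lemma sum_Box_fin2 {M : Type*} [AddCommMonoid M] (N : ℕ) (f : (Fin 2 →₀ ℕ) → M) :
    ∑ d ∈ Box (Fin 2) N, f d
      = ∑ i ∈ Finset.range N, ∑ j ∈ Finset.range N,
          f (Finsupp.single 0 i + Finsupp.single 1 j) := by
  rw [← Finset.sum_product']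
  exact Finset.sum_nbij' (i := fun d => (d 0, d 1))
    (j := fun p => Finsupp.single 0 p.1 + Finsupp.single 1 p.2)
    (fun d hd => Finset.mem_product.2 ⟨Finset.mem_range.2 (mem_Box.1 hd 0),
      Finset.mem_range.2 (mem_Box.1 hd 1)⟩)
    (fun p hp => mem_Box_pair (Finset.mem_range.1 (Finset.mem_product.1 hp).1)
      (Finset.mem_range.1 (Finset.mem_product.1 hp).2))
    (fun d _ => (fin2_finsupp_eq d).symm)
    (fun p _ => Prod.ext (single_add_single_apply₀ p.1 p.2) (single_add_single_apply₁ p.1 p.2))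
    (fun d _ => congrArg f (fin2_finsupp_eq d))

lemma mem_Box_unit {N i : ℕ} (hi : i < N) : (Finsupp.single () i : Unit →₀ ℕ) ∈ Box Unit N :=
  mem_Box.2 fun u => by rw [show u = () from rfl, Finsupp.single_eq_same]; exact hi

lemma sum_Box_unit {M : Type*} [AddCommMonoid M] (N : ℕ) (f : (Unit →₀ ℕ) → M) :
    ∑ d ∈ Box Unit N, f d = ∑ i ∈ Finset.range N, f (Finsupp.single () i) :=
  Finset.sum_nbij' (i := fun d => d ()) (j := fun i => Finsupp.single () i)
    (fun d hd => Finset.mem_range.2 (mem_Box.1 hd ()))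
    (fun i hi => mem_Box_unit (Finset.mem_range.1 hi))
    (fun d _ => (Finsupp.unique_single d).symm)
    (fun i _ => Finsupp.single_eq_same)
    (fun d _ => congrArg f (Finsupp.unique_single d))

lemma prod_pair_pow {τ : Type*} (a b : MvPowerSeries τ R) (i j : ℕ) :
    (∏ k, ![a, b] k ^ (Finsupp.single 0 i + Finsupp.single 1 j : Fin 2 →₀ ℕ) k)
      = a ^ i * b ^ j := by
  rw [Fin.prod_univ_two, single_add_single_apply₀, single_add_single_apply₁]
  simp

lemma subst2_eq_gsubst [DecidableEq τ] (a b : MvPowerSeries τ R)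
    (F : MvPowerSeries (Fin 2) R) :
    subst2 a b F = gsubst ![a, b] F := by
  ext m
  rw [coeff_subst2, coeff_gsubst, sum_Box_fin2]
  exact Finset.sum_congr rfl fun i _ => Finset.sum_congr rfl fun j _ => by
    rw [prod_pair_pow]

lemma psubst_eq_gsubst [DecidableEq τ] (A : MvPowerSeries τ R) (f : PowerSeries R) :
    psubst A f = gsubst (fun _ : Unit => A) f := by
  ext m
  rw [coeff_psubst, coeff_gsubst, sum_Box_unit]
  refine Finset.sum_congr rfl fun i _ => ?_
  rw [Fintype.prod_unique (fun u : Unit => A ^ (Finsupp.single () i : Unit →₀ ℕ) u),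
    Finsupp.single_eq_same]
  rfl

lemma subst2one_eq_subst2 (a b : PowerSeries R) (F : MvPowerSeries (Fin 2) R) :
    subst2one a b F = subst2 a b F := by
  ext n
  rw [subst2one, PowerSeries.coeff_mk]
  show _ = MvPowerSeries.coeff (Finsupp.single () n) (subst2 a b F)
  rw [coeff_subst2, msize_single]
  rfl

lemma pcomp_eq_psubst (a f : PowerSeries R) : pcomp a f = psubst a f := by
  ext n
  rw [pcomp, PowerSeries.coeff_mk]
  show _ = MvPowerSeries.coeff (Finsupp.single () n) (psubst a f)
  rw [coeff_psubst, msize_single]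
  rfl

end BridgeLemmas

section FGLLaws

variable {F : MvPowerSeries (Fin 2) R}

/-- The formal sum `F(a, b)`. -/
def fadd (F : MvPowerSeries (Fin 2) R) {τ : Type*} (a b : MvPowerSeries τ R) :
    MvPowerSeries τ R := gsubst ![a, b] F

lemma constantCoeff_fadd {τ : Type*} (a b : MvPowerSeries τ R) :
    MvPowerSeries.constantCoeff (fadd F a b)
      = MvPowerSeries.constantCoeff F := constantCoeff_gsubst _ _

lemma cons_cc {τ : Type*} {a b : MvPowerSeries τ R}
    (ha : MvPowerSeries.constantCoeff a = 0) (hb : MvPowerSeries.constantCoeff b = 0) :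
    ∀ i, MvPowerSeries.constantCoeff (![a, b] i) = 0 := by
  intro i
  fin_cases i
  · simpa using ha
  · simpa using hb

lemma cons_cc3 {τ : Type*} {a b c : MvPowerSeries τ R}
    (ha : MvPowerSeries.constantCoeff a = 0) (hb : MvPowerSeries.constantCoeff b = 0)
    (hc : MvPowerSeries.constantCoeff c = 0) :
    ∀ i, MvPowerSeries.constantCoeff (![a, b, c] i) = 0 := by
  intro i
  fin_cases i
  · simpa using ha
  · simpa using hb
  · simpa using hc

lemma gsubst_fadd {τ υ : Type*} [Fintype τ] [DecidableEq τ]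
    (g : τ → MvPowerSeries υ R) (hg : ∀ j, MvPowerSeries.constantCoeff (g j) = 0)
    {A B : MvPowerSeries τ R} (hA : MvPowerSeries.constantCoeff A = 0)
    (hB : MvPowerSeries.constantCoeff B = 0) :
    gsubst g (fadd F A B) = fadd F (gsubst g A) (gsubst g B) := by
  rw [fadd, fadd, gsubst_gsubst (cons_cc hA hB) hg]
  have : (fun i => gsubst g (![A, B] i)) = ![gsubst g A, gsubst g B] := by
    funext k
    fin_cases k <;> simp
  rw [this]

variable (hF : IsFGL F)
include hF

lemma isFGL_cc : MvPowerSeries.constantCoeff F = 0 := by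
  have h : MvPowerSeries.coeff (0 : ℕ →₀ ℕ)
        (subst2 (MvPowerSeries.X (0 : ℕ)) 0 F)
      = MvPowerSeries.coeff (0 : ℕ →₀ ℕ) (MvPowerSeries.X (0 : ℕ)) := by
    rw [MvPowerSeries.coeff_apply, MvPowerSeries.coeff_apply]
    exact congrFun hF.1 0
  rw [coeff_subst2, msize_zero] at h
  simp only [zero_add, Finset.sum_range_one, pow_zero, one_mul, mul_one,
    Finsupp.single_zero, add_zero] at h
  rw [MvPowerSeries.coeff_zero_eq_constantCoeff] at h
  simpa using h

lemma isFGL_c10 : MvPowerSeries.coeff (Finsupp.single 0 1) F = 1 := by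
  have h : MvPowerSeries.coeff (Finsupp.single (0 : ℕ) 1)
        (subst2 (MvPowerSeries.X (0 : ℕ)) 0 F)
      = MvPowerSeries.coeff (Finsupp.single (0 : ℕ) 1) (MvPowerSeries.X (0 : ℕ)) := by
    rw [MvPowerSeries.coeff_apply, MvPowerSeries.coeff_apply]
    exact congrFun hF.1 _
  rw [coeff_subst2, msize_single] at h
  simp only [Finset.sum_range_succ, Finset.sum_range_zero, Finset.sum_range_one] at h
  simpa [MvPowerSeries.coeff_X, MvPowerSeries.coeff_one, Finsupp.single_eq_zero,
    Finsupp.single_zero] using h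

lemma isFGL_c01 : MvPowerSeries.coeff (Finsupp.single 1 1) F = 1 := by
  have h : MvPowerSeries.coeff (Finsupp.single (1 : ℕ) 1)
        (subst2 0 (MvPowerSeries.X (1 : ℕ)) F)
      = MvPowerSeries.coeff (Finsupp.single (1 : ℕ) 1) (MvPowerSeries.X (1 : ℕ)) := by
    rw [MvPowerSeries.coeff_apply, MvPowerSeries.coeff_apply]
    exact congrFun hF.2.1 _
  rw [coeff_subst2, msize_single] at h
  simp only [Finset.sum_range_succ, Finset.sum_range_zero, Finset.sum_range_one] at h
  simpa [MvPowerSeries.coeff_X, MvPowerSeries.coeff_one, Finsupp.single_eq_zero,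
    Finsupp.single_zero] using h

end FGLLaws

end FGL

namespace FGL

open MvPowerSeries Finset

variable {R : Type*} [CommRing R]

section Laws

variable {F : MvPowerSeries (Fin 2) R}

lemma subst2_eq_fadd {τ : Type*} [DecidableEq τ] (a b : MvPowerSeries τ R)
    (F : MvPowerSeries (Fin 2) R) : subst2 a b F = fadd F a b :=
  subst2_eq_gsubst a b F

lemma fadd_cc {τ : Type*} (hF : IsFGL F) {a b : MvPowerSeries τ R} :
    MvPowerSeries.constantCoeff (fadd F a b) = 0 := by
  rw [constantCoeff_fadd, isFGL_cc hF]

lemma fadd_assoc {τ : Type*} [DecidableEq τ] (hF : IsFGL F) (a b c : MvPowerSeries τ R)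
    (ha : MvPowerSeries.constantCoeff a = 0) (hb : MvPowerSeries.constantCoeff b = 0)
    (hc : MvPowerSeries.constantCoeff c = 0) :
    fadd F (fadd F a b) c = fadd F a (fadd F b c) := by
  have h3 := hF.2.2.1
  rw [subst2_eq_fadd, subst2_eq_fadd, subst2_eq_fadd, subst2_eq_fadd] at h3
  have hg : ∀ i, MvPowerSeries.constantCoeff (![a, b, c] i) = 0 := cons_cc3 ha hb hc
  have hX : ∀ i : Fin 3, MvPowerSeries.constantCoeff (MvPowerSeries.X i : MvPowerSeries (Fin 3) R) = 0 :=
    fun i => MvPowerSeries.constantCoeff_X i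
  have h4 := congrArg (gsubst ![a, b, c]) h3
  rw [gsubst_fadd _ hg (fadd_cc hF) (hX 2),
      gsubst_fadd _ hg (hX 0) (hX 1),
      gsubst_fadd _ hg (hX 0) (fadd_cc hF),
      gsubst_fadd _ hg (hX 1) (hX 2),
      gsubst_X hg 0, gsubst_X hg 1, gsubst_X hg 2] at h4
  simpa using h4

lemma fadd_comm {τ : Type*} [DecidableEq τ] (hF : IsFGL F) (a b : MvPowerSeries τ R)
    (ha : MvPowerSeries.constantCoeff a = 0)
    (hb : MvPowerSeries.constantCoeff b = 0) :
    fadd F a b = fadd F b a := by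
  have h := hF.2.2.2
  rw [subst2_eq_fadd] at h
  have hX : ∀ i : Fin 2, MvPowerSeries.constantCoeff (MvPowerSeries.X i : MvPowerSeries (Fin 2) R) = 0 :=
    fun i => MvPowerSeries.constantCoeff_X i
  have h2 := congrArg (gsubst ![a, b]) h
  rw [gsubst_fadd _ (cons_cc ha hb) (hX 1) (hX 0),
      gsubst_X (cons_cc ha hb) 1, gsubst_X (cons_cc ha hb) 0] at h2
  have : gsubst ![a, b] F = fadd F a b := rfl
  rw [this] at h2
  simpa using h2.symm

lemma fadd_interchange {τ : Type*} [DecidableEq τ] (hF : IsFGL F)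
    (x y u v : MvPowerSeries τ R)
    (hx : MvPowerSeries.constantCoeff x = 0) (hy : MvPowerSeries.constantCoeff y = 0)
    (hu : MvPowerSeries.constantCoeff u = 0) (hv : MvPowerSeries.constantCoeff v = 0) :
    fadd F (fadd F x y) (fadd F u v) = fadd F (fadd F x u) (fadd F y v) :=
  calc fadd F (fadd F x y) (fadd F u v)
      = fadd F x (fadd F y (fadd F u v)) := fadd_assoc hF x y _ hx hy (fadd_cc hF)
    _ = fadd F x (fadd F (fadd F y u) v) := by rw [← fadd_assoc hF y u v hy hu hv]
    _ = fadd F x (fadd F (fadd F u y) v) := by rw [fadd_comm hF y u hy hu]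
    _ = fadd F x (fadd F u (fadd F y v)) := by rw [fadd_assoc hF u y v hu hy hv]
    _ = fadd F (fadd F x u) (fadd F y v) := (fadd_assoc hF x u _ hx hu (fadd_cc hF)).symm

lemma Z_subst2one (hF : IsFGL F) (a b : PowerSeries R) :
    MvPowerSeries.constantCoeff (subst2one a b F) = 0 := by
  rw [subst2one_eq_subst2, subst2_eq_fadd]
  exact fadd_cc hF

lemma Z_nseries (hF : IsFGL F) : ∀ n : ℕ,
    MvPowerSeries.constantCoeff (nSeries F n) = 0
  | 0 => by simp [nSeries]
  | 1 => by
      show MvPowerSeries.constantCoeff PowerSeries.X = 0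
      exact MvPowerSeries.constantCoeff_X ()
  | (n + 2) => Z_subst2one hF _ _

lemma nseries_succ (n : ℕ) (hn : 1 ≤ n) :
    nSeries F (n + 1) = fadd F PowerSeries.X (nSeries F n) := by
  obtain ⟨k, rfl⟩ : ∃ k, n = k + 1 := ⟨n - 1, by omega⟩
  show subst2one PowerSeries.X (nSeries F (k + 1)) F = _
  rw [subst2one_eq_subst2, subst2_eq_fadd]

lemma coeff_fadd_deg1 {τ : Type*} [DecidableEq τ] (hF : IsFGL F) {a b : MvPowerSeries τ R}
    (ha : MvPowerSeries.constantCoeff a = 0) (hb : MvPowerSeries.constantCoeff b = 0)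
    {m : τ →₀ ℕ} (hm : msize m = 1) :
    MvPowerSeries.coeff m (fadd F a b)
      = MvPowerSeries.coeff m a + MvPowerSeries.coeff m b := by
  rw [← subst2_eq_fadd, coeff_subst2, hm]
  have hab : MvPowerSeries.coeff m (a * b) = 0 :=
    (ordGE_one ha).mul (ordGE_one hb) m (by omega)
  have h00 : MvPowerSeries.coeff ((0 : Fin 2 →₀ ℕ)) F = 0 := by
    rw [MvPowerSeries.coeff_zero_eq_constantCoeff]
    exact isFGL_cc hF
  simp only [Finset.sum_range_succ, Finset.sum_range_zero, Finset.sum_range_one,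
    pow_zero, pow_one, one_mul, mul_one, Finsupp.single_zero, add_zero, zero_add]
  rw [h00, isFGL_c10 hF, isFGL_c01 hF, hab]
  ring

lemma coeff_one_nseries (hF : IsFGL F) : ∀ n : ℕ,
    PowerSeries.coeff 1 (nSeries F n) = (n : R) := by
  intro n
  induction n with
  | zero => simp [nSeries]
  | succ n ih =>
    rcases Nat.eq_zero_or_pos n with rfl | hn
    · show PowerSeries.coeff 1 PowerSeries.X = _
      simp
    · rw [nseries_succ n hn]
      show MvPowerSeries.coeff (Finsupp.single () 1) _ = _
      have hXcc : MvPowerSeries.constantCoeff (PowerSeries.X : PowerSeries R) = 0 :=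
        MvPowerSeries.constantCoeff_X ()
      rw [coeff_fadd_deg1 hF hXcc (Z_nseries hF n) (msize_single () 1)]
      show PowerSeries.coeff 1 PowerSeries.X + PowerSeries.coeff 1 (nSeries F n) = _
      rw [ih]
      simp
      push_cast
      ring

end Laws

end FGL

namespace FGL

open MvPowerSeries Finset

variable {R : Type*} [CommRing R]

section NApp

/-- `f([S])`: substitution of `S` into a one-variable power series `f`. -/
def napp {τ : Type*} (f : PowerSeries R) (S : MvPowerSeries τ R) : MvPowerSeries τ R :=
  gsubst (fun _ : Unit => S) f

lemma napp_cc {τ : Type*} (f : PowerSeries R) (S : MvPowerSeries τ R) :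
    MvPowerSeries.constantCoeff (napp f S)
      = MvPowerSeries.constantCoeff f := constantCoeff_gsubst _ _

lemma psubst_eq_napp {τ : Type*} [DecidableEq τ] (f : PowerSeries R) (S : MvPowerSeries τ R) :
    psubst S f = napp f S := psubst_eq_gsubst S f

lemma napp_X {τ : Type*} [DecidableEq τ] {S : MvPowerSeries τ R}
    (hS : MvPowerSeries.constantCoeff S = 0) :
    napp (PowerSeries.X : PowerSeries R) S = S := by
  show gsubst (fun _ : Unit => S) (MvPowerSeries.X ()) = S
  exact gsubst_X (fun _ => hS) ()

lemma gsubst_napp {τ υ : Type*} [Fintype τ] [DecidableEq τ]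
    (g : τ → MvPowerSeries υ R) (hg : ∀ j, MvPowerSeries.constantCoeff (g j) = 0)
    (f : PowerSeries R) {S : MvPowerSeries τ R}
    (hS : MvPowerSeries.constantCoeff S = 0) :
    gsubst g (napp f S) = napp f (gsubst g S) := by
  rw [napp, napp, gsubst_gsubst (fun _ => hS) hg]

variable {F : MvPowerSeries (Fin 2) R}

lemma napp_nseries_succ {τ : Type*} [DecidableEq τ] (hF : IsFGL F) {n : ℕ} (hn : 1 ≤ n)
    {S : MvPowerSeries τ R} (hS : MvPowerSeries.constantCoeff S = 0) :
    napp (nSeries F (n + 1)) S = fadd F S (napp (nSeries F n) S) := by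
  rw [nseries_succ n hn, napp]
  have hXcc : MvPowerSeries.constantCoeff (PowerSeries.X : PowerSeries R) = 0 :=
    MvPowerSeries.constantCoeff_X ()
  rw [gsubst_fadd (fun _ : Unit => S) (fun _ => hS) hXcc (Z_nseries hF n)]
  rw [show gsubst (fun _ : Unit => S) PowerSeries.X = napp PowerSeries.X S from rfl,
    napp_X hS]
  rfl

lemma fadd_X01 (hF : IsFGL F) :
    fadd F (MvPowerSeries.X 0) (MvPowerSeries.X 1) = F := by
  rw [fadd]
  have : ![(MvPowerSeries.X 0 : MvPowerSeries (Fin 2) R), MvPowerSeries.X 1]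
      = fun i : Fin 2 => MvPowerSeries.X i := by
    funext k
    fin_cases k <;> simp
  rw [this, gsubst_X_id]

set_option maxHeartbeats 1000000 in
lemma nseries_hom (hF : IsFGL F) : ∀ n : ℕ, 1 ≤ n →
    napp (nSeries F n) F
      = fadd F (napp (nSeries F n) (MvPowerSeries.X 0))
          (napp (nSeries F n) (MvPowerSeries.X 1)) := by
  intro n hn
  induction n with
  | zero => omega
  | succ n ih =>
    have hX0 : MvPowerSeries.constantCoeff (MvPowerSeries.X 0 : MvPowerSeries (Fin 2) R) = 0 :=
      MvPowerSeries.constantCoeff_X 0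
    have hX1 : MvPowerSeries.constantCoeff (MvPowerSeries.X 1 : MvPowerSeries (Fin 2) R) = 0 :=
      MvPowerSeries.constantCoeff_X 1
    rcases Nat.eq_zero_or_pos n with rfl | hn'
    · show napp (nSeries F 1) F = _
      rw [show nSeries F 1 = PowerSeries.X from rfl]
      rw [napp_X (isFGL_cc hF), napp_X hX0, napp_X hX1, fadd_X01 hF]
    · have hAcc : MvPowerSeries.constantCoeff
          (napp (nSeries F n) (MvPowerSeries.X 0)) = 0 := by
        rw [napp_cc]; exact Z_nseries hF n
      have hBcc : MvPowerSeries.constantCoeff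
          (napp (nSeries F n) (MvPowerSeries.X 1)) = 0 := by
        rw [napp_cc]; exact Z_nseries hF n
      rw [napp_nseries_succ hF hn' (isFGL_cc hF), napp_nseries_succ hF hn' hX0,
        napp_nseries_succ hF hn' hX1, ih hn']
      calc fadd F F (fadd F (napp (nSeries F n) (MvPowerSeries.X 0))
              (napp (nSeries F n) (MvPowerSeries.X 1)))
          = fadd F (fadd F (MvPowerSeries.X 0) (MvPowerSeries.X 1))
              (fadd F (napp (nSeries F n) (MvPowerSeries.X 0))
                (napp (nSeries F n) (MvPowerSeries.X 1))) := by
            exact congrArg (fun W => fadd F W (fadd F (napp (nSeries F n) (MvPowerSeries.X 0))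
              (napp (nSeries F n) (MvPowerSeries.X 1)))) (fadd_X01 hF).symm
        _ = fadd F (fadd F (MvPowerSeries.X 0) (napp (nSeries F n) (MvPowerSeries.X 0)))
              (fadd F (MvPowerSeries.X 1) (napp (nSeries F n) (MvPowerSeries.X 1))) :=
            fadd_interchange hF _ _ _ _ hX0 hX1 hAcc hBcc

lemma ordGE_napp_X (s : Fin 2) (f : PowerSeries R) (r : ℕ)
    (hf : ∀ k, k < r → PowerSeries.coeff k f = 0) :
    OrdGE (napp f (MvPowerSeries.X s) : MvPowerSeries (Fin 2) R) r := by
  intro u hu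
  rw [← psubst_eq_napp, coeff_psubst]
  refine Finset.sum_eq_zero fun k _ => ?_
  rw [MvPowerSeries.X_pow_eq, MvPowerSeries.coeff_monomial]
  rcases eq_or_ne u (Finsupp.single s k) with he | he
  · have : msize u = k := by rw [he, msize_single]
    rw [hf k (by omega), zero_mul]
  · rw [if_neg he, mul_zero]

lemma coeff_napp_X0 (f : PowerSeries R) {u : Fin 2 →₀ ℕ} (h : u 1 ≠ 0) :
    MvPowerSeries.coeff u (napp f (MvPowerSeries.X 0) : MvPowerSeries (Fin 2) R) = 0 := by
  rw [← psubst_eq_napp, coeff_psubst]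
  refine Finset.sum_eq_zero fun k _ => ?_
  rw [MvPowerSeries.X_pow_eq, MvPowerSeries.coeff_monomial]
  rw [if_neg, mul_zero]
  intro he
  apply h
  rw [he, Finsupp.single_apply]
  simp

lemma coeff_napp_X1 (f : PowerSeries R) {u : Fin 2 →₀ ℕ} (h : u 0 ≠ 0) :
    MvPowerSeries.coeff u (napp f (MvPowerSeries.X 1) : MvPowerSeries (Fin 2) R) = 0 := by
  rw [← psubst_eq_napp, coeff_psubst]
  refine Finset.sum_eq_zero fun k _ => ?_
  rw [MvPowerSeries.X_pow_eq, MvPowerSeries.coeff_monomial]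
  rw [if_neg, mul_zero]
  intro he
  apply h
  rw [he, Finsupp.single_apply]
  simp

end NApp

section P1

lemma coeff_pow_congr {τ : Type*} [DecidableEq τ] {A B : MvPowerSeries τ R}
    (hA : MvPowerSeries.constantCoeff A = 0) (hB : MvPowerSeries.constantCoeff B = 0)
    (h : ∀ u : τ →₀ ℕ, msize u ≤ 1 → MvPowerSeries.coeff u A = MvPowerSeries.coeff u B) :
    ∀ n : ℕ, ∀ m : τ →₀ ℕ, msize m ≤ n →
      MvPowerSeries.coeff m (A ^ n) = MvPowerSeries.coeff m (B ^ n) := by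
  intro n
  induction n with
  | zero => intro m _; rw [pow_zero, pow_zero]
  | succ n ih =>
    intro m hm
    have hAn : OrdGE (A ^ n) n := by
      have := (ordGE_one hA).pow n
      rwa [mul_one] at this
    have hBn : OrdGE (B ^ n) n := by
      have := (ordGE_one hB).pow n
      rwa [mul_one] at this
    rw [pow_succ, pow_succ, MvPowerSeries.coeff_mul, MvPowerSeries.coeff_mul]
    refine Finset.sum_congr rfl fun q hq => ?_
    have hqs : q.1 + q.2 = m := Finset.HasAntidiagonal.mem_antidiagonal.1 hq
    have hsz : msize q.1 + msize q.2 = msize m := by rw [← msize_add, hqs]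
    rcases le_or_gt (msize q.2) 1 with h2 | h2
    · rcases Nat.eq_zero_or_pos (msize q.2) with h0 | h0
      · have hq2 : q.2 = 0 := msize_eq_zero h0
        rw [hq2, MvPowerSeries.coeff_zero_eq_constantCoeff, hA, hB, mul_zero, mul_zero]
      · rw [h q.2 h2, ih q.1 (by omega)]
    · rw [hAn q.1 (by omega), hBn q.1 (by omega), zero_mul, zero_mul]

end P1

end FGL

namespace FGL

open MvPowerSeries Finset

variable {R : Type*} [CommRing R]

section Van

variable {F : MvPowerSeries (Fin 2) R}

lemma single_ne_single01 : (Finsupp.single (0 : Fin 2) 1) ≠ Finsupp.single (1 : Fin 2) 1 := by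
  intro h
  have := DFunLike.congr_fun h 0
  simp [Finsupp.single_apply] at this

lemma coeff_F_deg1 (hF : IsFGL F) :
    ∀ u : Fin 2 →₀ ℕ, msize u ≤ 1 → MvPowerSeries.coeff u F
      = MvPowerSeries.coeff u (MvPowerSeries.X 0 + MvPowerSeries.X 1) := by
  intro u hu
  rw [msize_fin2] at hu
  have hcases : (u 0 = 0 ∧ u 1 = 0) ∨ (u 0 = 1 ∧ u 1 = 0) ∨ (u 0 = 0 ∧ u 1 = 1) := by omega
  rw [fin2_finsupp_eq u]
  rcases hcases with ⟨h0, h1⟩ | ⟨h0, h1⟩ | ⟨h0, h1⟩ <;> rw [h0, h1]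
  · simp only [Finsupp.single_zero, add_zero, zero_add, map_add,
      MvPowerSeries.coeff_zero_eq_constantCoeff]
    rw [isFGL_cc hF]
    simp
  · simp only [Finsupp.single_zero, add_zero, map_add]
    rw [isFGL_c10 hF, MvPowerSeries.coeff_X, MvPowerSeries.coeff_X,
      if_pos rfl, if_neg single_ne_single01]
    ring
  · simp only [Finsupp.single_zero, zero_add, map_add]
    rw [isFGL_c01 hF, MvPowerSeries.coeff_X, MvPowerSeries.coeff_X,
      if_neg (Ne.symm single_ne_single01), if_pos rfl]
    ring

lemma coeff_X01_pow {n : ℕ} (hn : 1 ≤ n) :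
    MvPowerSeries.coeff (Finsupp.single 0 (n - 1) + Finsupp.single 1 1)
      ((MvPowerSeries.X 0 + MvPowerSeries.X 1 : MvPowerSeries (Fin 2) R) ^ n) = (n : R) := by
  rw [add_pow, map_sum]
  have hterm : ∀ k : ℕ, MvPowerSeries.coeff (Finsupp.single 0 (n - 1) + Finsupp.single 1 1)
      ((MvPowerSeries.X 0 : MvPowerSeries (Fin 2) R) ^ k * MvPowerSeries.X 1 ^ (n - k)
        * (n.choose k : MvPowerSeries (Fin 2) R))
      = if (Finsupp.single (0 : Fin 2) (n - 1) + Finsupp.single 1 1)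
          = Finsupp.single (0 : Fin 2) k + Finsupp.single 1 (n - k)
        then (n.choose k : R) else 0 := by
    intro k
    rw [MvPowerSeries.X_pow_eq, MvPowerSeries.X_pow_eq, MvPowerSeries.monomial_mul_monomial,
      one_mul]
    rw [show ((n.choose k : ℕ) : MvPowerSeries (Fin 2) R)
        = MvPowerSeries.C ((n.choose k : ℕ) : R) from
      (map_natCast (MvPowerSeries.C) (n.choose k)).symm]
    rw [MvPowerSeries.coeff_mul_C, MvPowerSeries.coeff_monomial, ite_mul, one_mul, zero_mul]
  rw [Finset.sum_congr rfl fun k _ => hterm k]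
  rw [Finset.sum_eq_single (n - 1)]
  · have hnk : n - (n - 1) = 1 := by omega
    rw [hnk, if_pos rfl]
    have hch : n.choose (n - 1) = n := by
      rw [← Nat.choose_symm (Nat.sub_le n 1), Nat.sub_sub_self hn, Nat.choose_one_right]
    rw [hch]
  · intro k _ hk
    rw [if_neg]
    intro he
    apply hk
    have h0 := DFunLike.congr_fun he 0
    rw [single_add_single_apply₀, single_add_single_apply₀] at h0
    omega
  · intro hmem
    exact absurd (Finset.mem_range.2 (by omega)) hmem

lemma nat_unit_of_lt_char {p : ℕ} (hp : p.Prime) (hchar : (p : R) = 0) {n : ℕ}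
    (h1 : 1 ≤ n) (h2 : n < p) : ∃ x : R, (n : R) * x = 1 := by
  have hnd : ¬ p ∣ n := Nat.not_dvd_of_pos_of_lt h1 h2
  have hco : Nat.Coprime p n := (Nat.Prime.coprime_iff_not_dvd hp).2 hnd
  have hg : Nat.gcd n p = 1 := hco.symm
  refine ⟨((Nat.gcdA n p : ℤ) : R), ?_⟩
  have hb := Nat.gcd_eq_gcd_ab n p
  rw [hg] at hb
  have hc := congrArg (fun z : ℤ => (z : R)) hb
  push_cast at hc
  rw [hchar] at hc
  linear_combination -hc

lemma coeff_nseries_eq_zero_of_lt (hF : IsFGL F) {p : ℕ} (hp : p.Prime)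
    (hchar : (p : R) = 0) :
    ∀ n : ℕ, 1 ≤ n → n < p → PowerSeries.coeff n (nSeries F p) = 0 := by
  intro n
  induction n using Nat.strong_induction_on with
  | _ n IH =>
  intro h1 h2
  rcases eq_or_lt_of_le h1 with heq | hn2
  · rw [← heq, coeff_one_nseries hF p, hchar]
  have hpge1 : 1 ≤ p := hp.pos
  have hbelow : ∀ k, k < n → PowerSeries.coeff k (nSeries F p) = 0 := by
    intro k hk
    rcases Nat.eq_zero_or_pos k with rfl | hk1
    · rw [PowerSeries.coeff_zero_eq_constantCoeff]
      exact Z_nseries hF p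
    · exact IH k hk hk1 (by omega)
  set m : Fin 2 →₀ ℕ := Finsupp.single 0 (n - 1) + Finsupp.single 1 1 with hmdef
  have hm : msize m = n := by rw [hmdef, msize_add, msize_single, msize_single]; omega
  have hm1 : m 1 = 1 := single_add_single_apply₁ (n - 1) 1
  have hm0 : m 0 = n - 1 := single_add_single_apply₀ (n - 1) 1
  have hid : MvPowerSeries.coeff m (napp (nSeries F p) F)
      = MvPowerSeries.coeff m
          (fadd F (napp (nSeries F p) (MvPowerSeries.X 0))
            (napp (nSeries F p) (MvPowerSeries.X 1))) := by
    rw [nseries_hom hF p hpge1]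
  have hX0cc : MvPowerSeries.constantCoeff
      (MvPowerSeries.X 0 + MvPowerSeries.X 1 : MvPowerSeries (Fin 2) R) = 0 := by
    simp [MvPowerSeries.constantCoeff_X]
  have hLHS : MvPowerSeries.coeff m (napp (nSeries F p) F)
      = PowerSeries.coeff n (nSeries F p) * (n : R) := by
    rw [napp, ← psubst_eq_gsubst, coeff_psubst, hm]
    rw [Finset.sum_eq_single n]
    · have hFn : MvPowerSeries.coeff m (F ^ n) = (n : R) := by
        rw [coeff_pow_congr (isFGL_cc hF) hX0cc (coeff_F_deg1 hF) n m (le_of_eq hm), hmdef]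
        exact coeff_X01_pow h1
      rw [hFn]
    · intro k hkmem hkne
      have hkn : k < n := by
        have := Finset.mem_range.1 hkmem
        omega
      rw [hbelow k hkn, zero_mul]
    · intro hne
      exact absurd (Finset.mem_range.2 (by omega)) hne
  have hOA : OrdGE (napp (nSeries F p) (MvPowerSeries.X 0) : MvPowerSeries (Fin 2) R) n :=
    ordGE_napp_X 0 _ n hbelow
  have hOB : OrdGE (napp (nSeries F p) (MvPowerSeries.X 1) : MvPowerSeries (Fin 2) R) n :=
    ordGE_napp_X 1 _ n hbelow
  have hRHS : MvPowerSeries.coeff m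
      (fadd F (napp (nSeries F p) (MvPowerSeries.X 0))
        (napp (nSeries F p) (MvPowerSeries.X 1))) = 0 := by
    rw [← subst2_eq_fadd, coeff_subst2, hm]
    refine Finset.sum_eq_zero fun i _ => Finset.sum_eq_zero fun j _ => ?_
    rcases Nat.lt_or_ge (i + j) 2 with hij | hij
    · have hc : (i = 0 ∧ j = 0) ∨ (i = 1 ∧ j = 0) ∨ (i = 0 ∧ j = 1) := by omega
      rcases hc with ⟨rfl, rfl⟩ | ⟨rfl, rfl⟩ | ⟨rfl, rfl⟩
      · simp only [pow_zero, one_mul, mul_one, Finsupp.single_zero, add_zero, zero_add]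
        rw [MvPowerSeries.coeff_zero_eq_constantCoeff, isFGL_cc hF, zero_mul]
      · simp only [pow_one, pow_zero, mul_one, Finsupp.single_zero, add_zero]
        rw [coeff_napp_X0 _ (by rw [hm1]; exact one_ne_zero), mul_zero]
      · simp only [pow_one, pow_zero, one_mul, Finsupp.single_zero, zero_add]
        rw [coeff_napp_X1 _ (by rw [hm0]; omega), mul_zero]
    · have hord := (hOA.pow i).mul (hOB.pow j)
      rw [hord m (by
        rw [hm]
        have h2n : 2 * n ≤ (i + j) * n := Nat.mul_le_mul_right n hij
        rw [Nat.add_mul] at h2n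
        omega), mul_zero]
  have hzero : PowerSeries.coeff n (nSeries F p) * (n : R) = 0 := by
    rw [← hLHS, hid, hRHS]
  obtain ⟨x, hx⟩ := nat_unit_of_lt_char hp hchar h1 h2
  calc PowerSeries.coeff n (nSeries F p)
      = PowerSeries.coeff n (nSeries F p) * ((n : R) * x) := by rw [hx, mul_one]
    _ = (PowerSeries.coeff n (nSeries F p) * (n : R)) * x := by ring
    _ = 0 := by rw [hzero, zero_mul]

end Van

end FGL

namespace FGL

open MvPowerSeries Finset

variable {R : Type*} [CommRing R]

section Hom

lemma napp_X_right (f : PowerSeries R) : napp f (PowerSeries.X : PowerSeries R) = f := by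
  rw [napp, show (fun _ : Unit => (PowerSeries.X : PowerSeries R))
    = (fun i : Unit => MvPowerSeries.X i) from rfl, gsubst_X_id]

lemma hom_fadd {F G : MvPowerSeries (Fin 2) R} {φ : PowerSeries R}
    (hFcc : MvPowerSeries.constantCoeff F = 0) (hφ : IsFGLHom F G φ)
    {τ : Type*} [DecidableEq τ] {a b : MvPowerSeries τ R}
    (ha : MvPowerSeries.constantCoeff a = 0)
    (hb : MvPowerSeries.constantCoeff b = 0) :
    napp φ (fadd F a b) = fadd G (napp φ a) (napp φ b) := by
  have hφcc : MvPowerSeries.constantCoeff φ = 0 := hφ.1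
  have h := hφ.2
  rw [psubst_eq_napp, psubst_eq_napp, psubst_eq_napp, subst2_eq_fadd] at h
  have hg : ∀ i, MvPowerSeries.constantCoeff (![a, b] i) = 0 := cons_cc ha hb
  have hX0 : MvPowerSeries.constantCoeff (MvPowerSeries.X 0 : MvPowerSeries (Fin 2) R) = 0 :=
    MvPowerSeries.constantCoeff_X 0
  have hX1 : MvPowerSeries.constantCoeff (MvPowerSeries.X 1 : MvPowerSeries (Fin 2) R) = 0 :=
    MvPowerSeries.constantCoeff_X 1
  have hA : MvPowerSeries.constantCoeff (napp φ (MvPowerSeries.X 0)) = 0 := by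
    rw [napp_cc]; exact hφcc
  have hB : MvPowerSeries.constantCoeff (napp φ (MvPowerSeries.X 1)) = 0 := by
    rw [napp_cc]; exact hφcc
  have h2 := congrArg (gsubst ![a, b]) h
  rw [gsubst_napp _ hg φ hFcc, gsubst_fadd _ hg hA hB,
    gsubst_napp _ hg φ hX0, gsubst_napp _ hg φ hX1,
    gsubst_X hg 0, gsubst_X hg 1] at h2
  have hab : gsubst ![a, b] F = fadd F a b := rfl
  rw [hab] at h2
  simpa using h2

lemma napp_nseries_phi {F G : MvPowerSeries (Fin 2) R} {φ : PowerSeries R}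
    (hF : IsFGL F) (hG : IsFGL G) (hφ : IsFGLHom F G φ) :
    ∀ n : ℕ, 1 ≤ n → napp φ (nSeries F n : PowerSeries R) = napp (nSeries G n) φ := by
  have hφcc : MvPowerSeries.constantCoeff φ = 0 := hφ.1
  intro n hn
  induction n with
  | zero => omega
  | succ n ih =>
    rcases Nat.eq_zero_or_pos n with rfl | hn'
    · show napp φ (nSeries F 1) = napp (nSeries G 1) φ
      rw [show nSeries F 1 = PowerSeries.X from rfl, show nSeries G 1 = PowerSeries.X from rfl,
        napp_X_right, napp_X hφcc]
    · have hXcc : MvPowerSeries.constantCoeff (PowerSeries.X : PowerSeries R) = 0 :=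
        MvPowerSeries.constantCoeff_X ()
      rw [nseries_succ n hn', hom_fadd (isFGL_cc hF) hφ hXcc
        (Z_nseries hF n), napp_nseries_succ hG hn' hφcc, ih hn']
      rw [napp_X_right φ]

lemma ordGE_powerseries (f : PowerSeries R) (r : ℕ)
    (hf : ∀ k, k < r → PowerSeries.coeff k f = 0) :
    OrdGE (f : MvPowerSeries Unit R) r := by
  intro u hu
  have h0 : u = Finsupp.single () (u ()) := Finsupp.unique_single u
  have hlt : u () < r := by rwa [h0, msize_single] at hu
  rw [h0]
  exact hf _ hlt

lemma monomial_single_pow (b : R) : ∀ k : ℕ,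
    (MvPowerSeries.monomial (Finsupp.single () 1) b : MvPowerSeries Unit R) ^ k
      = MvPowerSeries.monomial (Finsupp.single () k) (b ^ k)
  | 0 => by
      rw [pow_zero, pow_zero, Finsupp.single_zero]
      exact (MvPowerSeries.monomial_zero_one (σ := Unit) (R := R)).symm
  | (k + 1) => by
      rw [pow_succ, monomial_single_pow b k, MvPowerSeries.monomial_mul_monomial,
        ← Finsupp.single_add, pow_succ]

lemma coeff_pow_linear {φ : PowerSeries R}
    (hφcc : MvPowerSeries.constantCoeff φ = 0) (p : ℕ) :
    MvPowerSeries.coeff (Finsupp.single () p) ((φ : MvPowerSeries Unit R) ^ p)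
      = (PowerSeries.coeff 1 φ) ^ p := by
  have hBcc : MvPowerSeries.constantCoeff
      (MvPowerSeries.monomial (Finsupp.single () 1) (PowerSeries.coeff 1 φ)) = 0 := by
    rw [← MvPowerSeries.coeff_zero_eq_constantCoeff, MvPowerSeries.coeff_monomial, if_neg]
    exact fun h => one_ne_zero (Finsupp.single_eq_zero.1 h.symm)
  have hagree : ∀ u : Unit →₀ ℕ, msize u ≤ 1 → MvPowerSeries.coeff u φ
      = MvPowerSeries.coeff u
          (MvPowerSeries.monomial (Finsupp.single () 1) (PowerSeries.coeff 1 φ)) := by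
    intro u hu
    have h0 : u = Finsupp.single () (u ()) := Finsupp.unique_single u
    have ht : u () ≤ 1 := by rwa [h0, msize_single] at hu
    rcases Nat.le_one_iff_eq_zero_or_eq_one.1 ht with h | h <;> rw [h0, h]
    · rw [Finsupp.single_zero]
      simp only [MvPowerSeries.coeff_zero_eq_constantCoeff]
      rw [hφcc, hBcc]
    · rw [MvPowerSeries.coeff_monomial, if_pos rfl]
      rfl
  rw [coeff_pow_congr hφcc hBcc hagree p (Finsupp.single () p) (le_of_eq (msize_single () p)),
    monomial_single_pow, MvPowerSeries.coeff_monomial, if_pos rfl]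

end Hom

end FGL

namespace FGL

/-- Over an `𝔽_p`-algebra `R`, if `φ : F₁ → F₂` is an isomorphism of formal
group laws, `u₁`, `u₂` are the coefficients of `T^p` in the `p`-series of `F₁`, `F₂`, and
`b = φ′(0)`, then `u₁ = b^(p-1) · u₂`; that is, `v₁ = u₁ · η^{⊗(p-1)}` is an isomorphism
invariant. -/
theorem v1_invariant {R : Type*} [CommRing R] (p : ℕ) (hp : p.Prime) (hchar : (p : R) = 0)
    (F₁ F₂ : MvPowerSeries (Fin 2) R) (hF₁ : IsFGL F₁) (hF₂ : IsFGL F₂)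
    (φ ψ : PowerSeries R) (hφ : IsFGLHom F₁ F₂ φ) (hψ : IsFGLHom F₂ F₁ ψ)
    (h1 : pcomp φ ψ = PowerSeries.X) (h2 : pcomp ψ φ = PowerSeries.X) :
    PowerSeries.coeff p (nSeries F₁ p)
      = (PowerSeries.coeff 1 φ) ^ (p - 1) * PowerSeries.coeff p (nSeries F₂ p) := by
  classical
  have hφcc : MvPowerSeries.constantCoeff φ = 0 := hφ.1
  have hp1 : 1 ≤ p := hp.pos
  have hbelow1 : ∀ k, k < p → PowerSeries.coeff k (nSeries F₁ p) = 0 := by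
    intro k hk
    rcases Nat.eq_zero_or_pos k with rfl | hk1
    · rw [PowerSeries.coeff_zero_eq_constantCoeff]
      exact Z_nseries hF₁ p
    · exact coeff_nseries_eq_zero_of_lt hF₁ hp hchar k hk1 hk
  have hbelow2 : ∀ k, k < p → PowerSeries.coeff k (nSeries F₂ p) = 0 := by
    intro k hk
    rcases Nat.eq_zero_or_pos k with rfl | hk1
    · rw [PowerSeries.coeff_zero_eq_constantCoeff]
      exact Z_nseries hF₂ p
    · exact coeff_nseries_eq_zero_of_lt hF₂ hp hchar k hk1 hk
  have hO1 : OrdGE (nSeries F₁ p : MvPowerSeries Unit R) p := ordGE_powerseries _ p hbelow1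
  have hkey := napp_nseries_phi hF₁ hF₂ hφ p hp1
  have hco : MvPowerSeries.coeff (Finsupp.single () p) (napp φ (nSeries F₁ p))
      = MvPowerSeries.coeff (Finsupp.single () p) (napp (nSeries F₂ p) φ) := by rw [hkey]
  have hL : MvPowerSeries.coeff (Finsupp.single () p) (napp φ (nSeries F₁ p))
      = PowerSeries.coeff 1 φ * PowerSeries.coeff p (nSeries F₁ p) := by
    rw [← psubst_eq_napp, coeff_psubst, msize_single]
    rw [Finset.sum_eq_single 1]
    · rw [pow_one]
      rfl
    · intro k hkmem hkne
      rcases Nat.eq_zero_or_pos k with rfl | hk1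
      · rw [pow_zero, MvPowerSeries.coeff_one, if_neg, mul_zero]
        exact fun h => (by omega : p ≠ 0) (Finsupp.single_eq_zero.1 h)
      · rw [(hO1.pow k) (Finsupp.single () p) (by
          rw [msize_single]
          have hlt := (Nat.mul_lt_mul_right hp.pos).2 (show 1 < k by omega)
          rwa [one_mul] at hlt), mul_zero]
    · intro hne
      exact absurd (Finset.mem_range.2 (by omega)) hne
  have hR : MvPowerSeries.coeff (Finsupp.single () p) (napp (nSeries F₂ p) φ)
      = PowerSeries.coeff p (nSeries F₂ p) * (PowerSeries.coeff 1 φ) ^ p := by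
    rw [← psubst_eq_napp, coeff_psubst, msize_single]
    rw [Finset.sum_eq_single p]
    · rw [coeff_pow_linear hφcc p]
    · intro k hkmem hkne
      have hklt : k < p := by
        have := Finset.mem_range.1 hkmem
        omega
      rw [hbelow2 k hklt, zero_mul]
    · intro hne
      exact absurd (Finset.mem_range.2 (by omega)) hne
  have hinv : PowerSeries.coeff 1 ψ * PowerSeries.coeff 1 φ = 1 := by
    have hc : PowerSeries.coeff 1 (pcomp φ ψ) = PowerSeries.coeff 1 PowerSeries.X := by
      rw [h1]
    rw [pcomp, PowerSeries.coeff_mk, Finset.sum_range_succ, Finset.sum_range_one,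
      pow_zero, pow_one] at hc
    simpa [PowerSeries.coeff_one] using hc
  have hmain : PowerSeries.coeff 1 φ * PowerSeries.coeff p (nSeries F₁ p)
      = PowerSeries.coeff p (nSeries F₂ p) * (PowerSeries.coeff 1 φ) ^ p := by
    rw [← hL, hco, hR]
  have hpow : (PowerSeries.coeff 1 φ) ^ p
      = (PowerSeries.coeff 1 φ) ^ (p - 1) * PowerSeries.coeff 1 φ := by
    conv_lhs => rw [show p = (p - 1) + 1 by omega]
    rw [pow_succ]
  calc PowerSeries.coeff p (nSeries F₁ p)
      = (PowerSeries.coeff 1 ψ * PowerSeries.coeff 1 φ)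
          * PowerSeries.coeff p (nSeries F₁ p) := by rw [hinv, one_mul]
    _ = PowerSeries.coeff 1 ψ
          * (PowerSeries.coeff 1 φ * PowerSeries.coeff p (nSeries F₁ p)) := by ring
    _ = PowerSeries.coeff 1 ψ
          * (PowerSeries.coeff p (nSeries F₂ p) * (PowerSeries.coeff 1 φ) ^ p) := by
        rw [hmain]
    _ = (PowerSeries.coeff 1 φ) ^ (p - 1) * PowerSeries.coeff p (nSeries F₂ p)
          * (PowerSeries.coeff 1 ψ * PowerSeries.coeff 1 φ) := by rw [hpow]; ring
    _ = (PowerSeries.coeff 1 φ) ^ (p - 1) * PowerSeries.coeff p (nSeries F₂ p) := by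
        rw [hinv, mul_one]


end FGL
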